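/- Let h : ℝ₊ → ℝ₊ be measurable, z ∈ ℝ, n ≥ 1, and let π be the minimally irreducible pairing in P_n. Then the Laplace transform of χ_t(π) satisfies ∫_{ℝ₊} e^{-tz} χ_t(π) dt ≤ (∫_{ℝ₊} h(w) e^{-wz} dw) · (∫_{ℝ₊} ∫_{ℝ₊} h(y+w) e^{-wz} dy dw)^{n-1}, whenever the right-hand side integrals are finite. -/

import Mathlib

open MeasureTheory Real

noncomputable section

/-- The minimally irreducible pairing in `P_n`: `{(1,2)}` for `n = 1`,
`{(1,3),(2,4)}` for `n = 2`, and `(1,3), (2n-2,2n), (2i,2i+3)` for `i = 1,…,n-2`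
for `n > 2`. -/
def minIrr (n : ℕ) : Finset (ℕ × ℕ) :=
  if n = 1 then {(1, 2)} else
    insert (1, 3) (insert (2 * n - 2, 2 * n)
      ((Finset.range (n - 2)).image fun i => (2 * i + 2, 2 * i + 5)))

/-- The time associated to the label `j ∈ {1,…,2n}`: `t₁ = 0`, `t_{2n} = t`, and the
interior times are the integration variables `u`. -/
def tmv (n : ℕ) (t : ℝ) (u : Fin (2 * n - 2) → ℝ) (j : ℕ) : ℝ :=
  if j ≤ 1 then 0 else if 2 * n ≤ j then t
  else if h : j - 2 < 2 * n - 2 then u ⟨j - 2, h⟩ else 0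

/-- `χ_t(π) = ∫_{0 = t₁ ≤ … ≤ t_{2n} = t} ∏_{(r,s)∈π} h(t_s - t_r) dt₂ ⋯ dt_{2n-1}`. -/
def chi (h : ℝ → ℝ) (n : ℕ) (t : ℝ) (pr : Finset (ℕ × ℕ)) : ℝ :=
  ∫ u in {u : Fin (2 * n - 2) → ℝ |
      (∀ i j : Fin (2 * n - 2), i ≤ j → u i ≤ u j) ∧ ∀ i, 0 ≤ u i ∧ u i ≤ t},
    ∏ p ∈ pr, h (tmv n t u p.2 - tmv n t u p.1)

namespace MinIrrAux

open Set ENNReal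

/-! ### Basic combinatorial set-up -/

def idx {k : ℕ} (u : Fin k → ℝ) (j : ℕ) : ℝ := if hj : j < k then u ⟨j, hj⟩ else 0

def G (h : ℝ → ℝ) : (m : ℕ) → ℝ → (Fin (2*m) → ℝ) → ℝ≥0∞
  | 0, t, _ => ENNReal.ofReal (h t)
  | (m+1), t, u =>
      ENNReal.ofReal (h (idx u 1)) *
      (∏ i ∈ Finset.range m, ENNReal.ofReal (h (idx u (2*i+3) - idx u (2*i)))) *
      ENNReal.ofReal (h (t - idx u (2*m)))

def SS (k : ℕ) (t : ℝ) : Set (Fin k → ℝ) :=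
  {u | (∀ i j : Fin k, i ≤ j → u i ≤ u j) ∧ ∀ i, 0 ≤ u i ∧ u i ≤ t}

lemma measurable_idx {k : ℕ} (j : ℕ) : Measurable (fun u : Fin k → ℝ => idx u j) := by
  by_cases hj : j < k
  · simpa [idx, hj] using measurable_pi_apply (⟨j, hj⟩ : Fin k)
  · simpa [idx, hj] using measurable_const

lemma measurable_G {h : ℝ → ℝ} (hmeas : Measurable h) (m : ℕ) :
    Measurable (fun p : ℝ × (Fin (2*m) → ℝ) => G h m p.1 p.2) := by
  cases m with
  | zero =>
    simp only [G]
    exact ENNReal.measurable_ofReal.comp (hmeas.comp measurable_fst)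
  | succ m =>
    simp only [G]
    refine Measurable.mul (Measurable.mul ?_ ?_) ?_
    · exact ENNReal.measurable_ofReal.comp
        (hmeas.comp ((measurable_idx 1).comp measurable_snd))
    · exact Finset.measurable_prod _ fun i _ =>
        ENNReal.measurable_ofReal.comp (hmeas.comp
          (((measurable_idx _).comp measurable_snd).sub
            ((measurable_idx _).comp measurable_snd)))
    · exact ENNReal.measurable_ofReal.comp
        (hmeas.comp (measurable_fst.sub ((measurable_idx _).comp measurable_snd)))

lemma measurableSet_SS_prod (k : ℕ) :
    MeasurableSet {p : ℝ × (Fin k → ℝ) | p.2 ∈ SS k p.1} := by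
  have : {p : ℝ × (Fin k → ℝ) | p.2 ∈ SS k p.1} =
      (⋂ (i : Fin k), ⋂ (j : Fin k), ⋂ (_ : i ≤ j), {p : ℝ × (Fin k → ℝ) | p.2 i ≤ p.2 j}) ∩
      ((⋂ (i : Fin k), {p : ℝ × (Fin k → ℝ) | 0 ≤ p.2 i}) ∩
        ⋂ (i : Fin k), {p : ℝ × (Fin k → ℝ) | p.2 i ≤ p.1}) := by
    ext p
    simp only [SS, Set.mem_setOf_eq, Set.mem_inter_iff, Set.mem_iInter]
    constructor
    · rintro ⟨h1, h2⟩; exact ⟨h1, fun i => (h2 i).1, fun i => (h2 i).2⟩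
    · rintro ⟨h1, h2, h3⟩; exact ⟨h1, fun i => ⟨h2 i, h3 i⟩⟩
  rw [this]
  refine (MeasurableSet.iInter fun i => .iInter fun j => .iInter fun _ => ?_).inter
    ((MeasurableSet.iInter fun i => ?_).inter (.iInter fun i => ?_))
  · exact measurableSet_le (measurable_snd.eval) (measurable_snd.eval)
  · exact measurableSet_le measurable_const (measurable_snd.eval)
  · exact measurableSet_le (measurable_snd.eval) measurable_fst

lemma measurableSet_SS (k : ℕ) (t : ℝ) : MeasurableSet (SS k t) :=
  (measurableSet_SS_prod k).preimage (measurable_const.prodMk measurable_id)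

/-! ### Identification of the integrand -/

lemma idx_cast {k k' : ℕ} (hk : k ≤ k') (u : Fin k' → ℝ) {j : ℕ} (hj : j < k) :
    idx (fun i : Fin k => u (Fin.castLE hk i)) j = idx u j := by
  rw [idx, dif_pos hj, idx, dif_pos (lt_of_lt_of_le hj hk)]
  rfl

lemma tmv_mid {n : ℕ} (t : ℝ) (u : Fin (2*n-2) → ℝ) {j : ℕ} (h2 : 2 ≤ j) (hj : j < 2*n) :
    tmv n t u j = idx u (j-2) := by
  rw [tmv, if_neg (by omega), if_neg (by omega)]
  rfl

lemma tmv_bot {n : ℕ} (t : ℝ) (u : Fin (2*n-2) → ℝ) {j : ℕ} (hj : j ≤ 1) :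
    tmv n t u j = 0 := by rw [tmv, if_pos hj]

lemma tmv_top {n : ℕ} (t : ℝ) (u : Fin (2*n-2) → ℝ) {j : ℕ} (hj : 2*n ≤ j) (h1 : 1 < j) :
    tmv n t u j = t := by rw [tmv, if_neg (by omega), if_pos hj]

lemma G_succ (h : ℝ → ℝ) (m : ℕ) (t : ℝ) (u : Fin (2*(m+1)) → ℝ) :
    G h (m+1) t u
      = G h m (idx u (2*m+1)) (fun j : Fin (2*m) => u (Fin.castLE (by omega) j)) *
        ENNReal.ofReal (h (t - idx u (2*m))) := by
  cases m with
  | zero => simp [G]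
  | succ k =>
    simp only [G]
    rw [Finset.prod_range_succ]
    rw [idx_cast (by omega : 2*(k+1) ≤ 2*(k+1+1)) u (by omega : 1 < 2*(k+1))]
    have hp : (∏ i ∈ Finset.range k, ENNReal.ofReal
          (h (idx (fun j : Fin (2*(k+1)) => u (Fin.castLE (by omega) j)) (2*i+3)
            - idx (fun j : Fin (2*(k+1)) => u (Fin.castLE (by omega) j)) (2*i))))
        = ∏ i ∈ Finset.range k, ENNReal.ofReal (h (idx u (2*i+3) - idx u (2*i))) :=
      Finset.prod_congr rfl fun i hi => by
        have hik : i < k := Finset.mem_range.1 hi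
        rw [idx_cast (by omega) u (by omega), idx_cast (by omega) u (by omega)]
    rw [hp]
    rw [idx_cast (by omega : 2*(k+1) ≤ 2*(k+1+1)) u (by omega : 2*k < 2*(k+1))]
    have h23 : (2*(k+1)+1) = 2*k+3 := by omega
    rw [h23]
    ring

lemma prod_minIrr {h : ℝ → ℝ} (hnn : ∀ s, 0 ≤ h s) (m : ℕ) (t : ℝ)
    (u : Fin (2*(m+1)-2) → ℝ) :
    ENNReal.ofReal (∏ p ∈ minIrr (m+1), h (tmv (m+1) t u p.2 - tmv (m+1) t u p.1))
      = G h m t u := by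
  rw [ENNReal.ofReal_prod_of_nonneg (fun p _ => hnn _)]
  cases m with
  | zero =>
    rw [minIrr, if_pos rfl, Finset.prod_singleton]
    rw [tmv_top t u (by norm_num) (by norm_num), tmv_bot t u (by norm_num), sub_zero]
    rfl
  | succ k =>
    rw [minIrr, if_neg (by omega)]
    simp only [show k + 1 + 1 = k + 2 from rfl]
    have h1 : ((1:ℕ),(3:ℕ)) ∉ insert (2*(k+2)-2, 2*(k+2))
        ((Finset.range (k+2-2)).image fun i => (2*i+2, 2*i+5)) := by
      simp only [Finset.mem_insert, Finset.mem_image, Finset.mem_range, Prod.mk.injEq]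
      push_neg
      refine ⟨fun h => by omega, fun i hi h => by omega⟩
    have h2 : ((2*(k+2)-2 : ℕ), (2*(k+2) : ℕ)) ∉
        ((Finset.range (k+2-2)).image fun i => (2*i+2, 2*i+5)) := by
      simp only [Finset.mem_image, Finset.mem_range, Prod.mk.injEq]
      push_neg
      exact fun i hi h => by omega
    rw [Finset.prod_insert h1, Finset.prod_insert h2,
      Finset.prod_image (fun a _ b _ hab => by
        simp only [Prod.mk.injEq] at hab; omega)]
    have e1 : tmv (k+2) t u 3 - tmv (k+2) t u 1 = idx u 1 := by
      rw [tmv_mid t u (by omega) (by omega), tmv_bot t u (by omega), sub_zero]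
    have e2 : tmv (k+2) t u (2*(k+2)) - tmv (k+2) t u (2*(k+2)-2)
        = t - idx u (2*k) := by
      rw [tmv_top t u (by omega) (by omega), tmv_mid t u (by omega) (by omega)]
      rw [show 2*(k+2)-2-2 = 2*k from by omega]
    have e3 : ∀ i ∈ Finset.range (k+2-2),
        ENNReal.ofReal (h (tmv (k+2) t u (2*i+2, 2*i+5).2 - tmv (k+2) t u (2*i+2, 2*i+5).1))
          = ENNReal.ofReal (h (idx u (2*i+3) - idx u (2*i))) := by
      intro i hi
      simp only [Finset.mem_range] at hi
      rw [tmv_mid t u (by omega) (by omega), tmv_mid t u (by omega) (by omega)]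
      rw [show 2*i+5-2 = 2*i+3 from by omega, show 2*i+2-2 = 2*i from by omega]
    rw [Finset.prod_congr rfl e3, e1, e2]
    simp only [G]
    rw [show k + 2 - 2 = k from by omega]
    ring

/-! ### Peeling coordinates -/

def reas (m : ℕ) (x a : ℝ) (v : Fin (2*m) → ℝ) : Fin (2*m+1+1) → ℝ :=
  (Fin.last (2*m+1)).insertNth x ((Fin.last (2*m)).insertNth a v)

lemma reas_last {m x a v} : reas m x a v (Fin.last (2*m+1)) = x :=
  Fin.insertNth_apply_same _ _ _

lemma reas_snd {m x a v} : reas m x a v ((Fin.last (2*m)).castSucc) = a := by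
  rw [reas, ← Fin.succAbove_last, Fin.insertNth_apply_succAbove,
    Fin.insertNth_apply_same]

lemma reas_cast {m x a v} (j : Fin (2*m)) :
    reas m x a v (Fin.castLE (by omega) j) = v j := by
  have hj : (Fin.castLE (by omega) j : Fin (2*m+1+1))
      = ((Fin.last (2*m+1)).succAbove ((Fin.last (2*m)).succAbove j)) := by
    simp [Fin.succAbove_last]
    ext
    simp
  rw [reas, hj, Fin.insertNth_apply_succAbove, Fin.insertNth_apply_succAbove]

lemma reas_idx_top {m x a v} : idx (reas m x a v) (2*m+1) = x := by
  rw [idx, dif_pos (by omega)]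
  exact reas_last

lemma reas_idx_snd {m x a v} : idx (reas m x a v) (2*m) = a := by
  rw [idx, dif_pos (by omega)]
  exact reas_snd

lemma reas_mem {m x a v t} (hu : reas m x a v ∈ SS (2*m+1+1) t) :
    v ∈ SS (2*m) x ∧ a ≤ x ∧ x ∈ Icc 0 t := by
  obtain ⟨hmono, hb⟩ := hu
  have hvx : ∀ j : Fin (2*m), v j ≤ x := by
    intro j
    calc v j = reas m x a v (Fin.castLE (by omega) j) := (reas_cast j).symm
    _ ≤ reas m x a v (Fin.last (2*m+1)) :=
      hmono _ _ (by simp only [Fin.le_def, Fin.coe_castLE, Fin.val_last]; omega)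
    _ = x := reas_last
  refine ⟨⟨fun i j hij => ?_, fun i => ⟨?_, hvx i⟩⟩, ?_, ?_, ?_⟩
  · calc v i = reas m x a v (Fin.castLE (by omega) i) := (reas_cast i).symm
    _ ≤ reas m x a v (Fin.castLE (by omega) j) :=
      hmono _ _ (by simp only [Fin.le_def, Fin.coe_castLE]; exact hij)
    _ = v j := reas_cast j
  · have := (hb (Fin.castLE (by omega) i)).1
    rwa [reas_cast] at this
  · calc a = reas m x a v ((Fin.last (2*m)).castSucc) := reas_snd.symm
    _ ≤ reas m x a v (Fin.last (2*m+1)) :=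
      hmono _ _ (by simp only [Fin.le_def, Fin.coe_castSucc, Fin.val_last]; omega)
    _ = x := reas_last
  · have := (hb (Fin.last (2*m+1))).1
    rwa [reas_last] at this
  · have := (hb (Fin.last (2*m+1))).2
    rwa [reas_last] at this

lemma peel (k : ℕ) (F : (Fin (k+1) → ℝ) → ℝ≥0∞) (hF : Measurable F) :
    ∫⁻ u, F u = ∫⁻ x : ℝ, ∫⁻ w : Fin k → ℝ, F ((Fin.last k).insertNth x w) := by
  have mp := (volume_preserving_piFinSuccAbove (fun _ : Fin (k+1) => ℝ) (Fin.last k)).symm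
  have h1 := mp.lintegral_comp hF
  rw [← h1, Measure.volume_eq_prod,
    lintegral_prod (fun p : ℝ × (Fin k → ℝ) =>
        F ((MeasurableEquiv.piFinSuccAbove (fun _ => ℝ) (Fin.last k)).symm p))
      ((hF.comp (MeasurableEquiv.measurable _)).aemeasurable)]
  rfl

/-! ### The analytic kernel computations -/

def Kk (h : ℝ → ℝ) (t b : ℝ) : ℝ≥0∞ := ∫⁻ a in Iic b, ENNReal.ofReal (h (t - a))

lemma measurable_Kk {h : ℝ → ℝ} (hmeas : Measurable h) :
    Measurable (fun q : ℝ × ℝ => Kk h q.1 q.2) := by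
  have e : ∀ q : ℝ × ℝ, Kk h q.1 q.2
      = ∫⁻ a, (fun p : (ℝ × ℝ) × ℝ =>
          if p.2 ≤ p.1.2 then ENNReal.ofReal (h (p.1.1 - p.2)) else 0) (q, a) := by
    intro q
    rw [Kk, ← lintegral_indicator measurableSet_Iic]
    refine lintegral_congr fun a => ?_
    simp [Set.indicator_apply, Set.mem_Iic]
  simp_rw [e]
  have mf : Measurable (fun p : (ℝ × ℝ) × ℝ =>
      if p.2 ≤ p.1.2 then ENNReal.ofReal (h (p.1.1 - p.2)) else 0) :=
    Measurable.ite
      (measurableSet_le measurable_snd (measurable_fst.snd))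
      (ENNReal.measurable_ofReal.comp (hmeas.comp ((measurable_fst.fst).sub measurable_snd)))
      measurable_const
  exact mf.lintegral_prod_right'

lemma measurable_Kk_left {h : ℝ → ℝ} (hmeas : Measurable h) (b : ℝ) :
    Measurable (fun t : ℝ => Kk h t b) := by
  have := (measurable_Kk hmeas).comp
    (measurable_prodMk_right : Measurable fun t : ℝ => (t, b))
  exact this

lemma measurable_exp_aux (z : ℝ) :
    Measurable fun t : ℝ => ENNReal.ofReal (Real.exp (-t * z)) :=
  ENNReal.measurable_ofReal.comp
    (Real.measurable_exp.comp ((measurable_id.neg).mul_const z))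

lemma subst_add (b : ℝ) (g : ℝ → ℝ≥0∞) :
    ∫⁻ t in Ici b, g t = ∫⁻ w in Ici 0, g (w + b) := by
  have hemb : MeasurableEmbedding (fun x : ℝ => x + b) :=
    (MeasurableEquiv.addRight b).measurableEmbedding
  have hmp : MeasurePreserving (fun x : ℝ => x + b) volume volume :=
    measurePreserving_add_right volume b
  have hpre : (fun x : ℝ => x + b) ⁻¹' Ici b = Ici 0 := by
    ext w; simp [Set.mem_preimage, Set.mem_Ici, le_add_iff_nonneg_left]
  rw [← hmp.setLIntegral_comp_preimage_emb hemb g (Ici b), hpre]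

lemma subst_sub (b : ℝ) (g : ℝ → ℝ≥0∞) :
    ∫⁻ a in Iic b, g a = ∫⁻ y in Ici 0, g (b - y) := by
  have hemb : MeasurableEmbedding (fun x : ℝ => b - x) :=
    (MeasurableEquiv.subLeft b).measurableEmbedding
  have hmp : MeasurePreserving (fun x : ℝ => b - x) volume volume :=
    Measure.measurePreserving_sub_left volume b
  have hpre : (fun x : ℝ => b - x) ⁻¹' Iic b = Ici 0 := by
    ext w; simp [Set.mem_preimage, Set.mem_Iic, Set.mem_Ici, sub_le_self_iff]
  rw [← hmp.setLIntegral_comp_preimage_emb hemb g (Iic b), hpre]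

lemma Cb {h : ℝ → ℝ} (hmeas : Measurable h) (z : ℝ) (b : ℝ) :
    (∫⁻ t in Ioi 0, ENNReal.ofReal (Real.exp (-t * z)) *
        (Icc 0 t).indicator (1 : ℝ → ℝ≥0∞) b * Kk h t b)
      ≤ (Ici 0).indicator (fun b => ENNReal.ofReal (Real.exp (-b * z))) b *
        (∫⁻ w in Ici (0:ℝ), ENNReal.ofReal (Real.exp (-w * z)) *
          ∫⁻ y in Ici (0:ℝ), ENNReal.ofReal (h (w + y))) := by
  by_cases hb : 0 ≤ b
  · have step1 : (∫⁻ t in Ioi 0, ENNReal.ofReal (Real.exp (-t * z)) *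
          (Icc 0 t).indicator (1 : ℝ → ℝ≥0∞) b * Kk h t b)
        ≤ ∫⁻ t in Ici b, ENNReal.ofReal (Real.exp (-t * z)) * Kk h t b := by
      rw [← lintegral_indicator measurableSet_Ioi, ← lintegral_indicator measurableSet_Ici]
      refine lintegral_mono fun t => ?_
      simp only [Set.indicator_apply, Set.mem_Ioi, Set.mem_Icc, Set.mem_Ici]
      split_ifs <;> simp_all
    refine step1.trans ?_
    rw [subst_add b (fun t => ENNReal.ofReal (Real.exp (-t * z)) * Kk h t b)]
    have key : ∀ w : ℝ,
        ENNReal.ofReal (Real.exp (-(w + b) * z)) * Kk h (w + b) b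
          = ENNReal.ofReal (Real.exp (-b * z)) *
            (ENNReal.ofReal (Real.exp (-w * z)) *
              ∫⁻ y in Ici (0:ℝ), ENNReal.ofReal (h (w + y))) := by
      intro w
      have hK : Kk h (w + b) b = ∫⁻ y in Ici (0:ℝ), ENNReal.ofReal (h (w + y)) := by
        rw [Kk, subst_sub b (fun a => ENNReal.ofReal (h (w + b - a)))]
        refine setLIntegral_congr_fun measurableSet_Ici (fun y _ => ?_)
        congr 1
        ring
      rw [hK, show -(w + b) * z = -w * z + -b * z by ring, Real.exp_add,
        ENNReal.ofReal_mul (exp_nonneg _)]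
      ring
    rw [lintegral_congr key, lintegral_const_mul' _ _ ENNReal.ofReal_ne_top,
      Set.indicator_of_mem (Set.mem_Ici.2 hb)]
  · have hz : ∀ t : ℝ, (Icc (0:ℝ) t).indicator (1 : ℝ → ℝ≥0∞) b = 0 := by
      intro t
      exact Set.indicator_of_notMem (fun hmem => hb hmem.1) _
    simp only [hz, mul_zero, zero_mul, lintegral_const]
    simp

lemma Bconv {h : ℝ → ℝ} (hmeas : Measurable h) (hnn : ∀ s, 0 ≤ h s) (z : ℝ) :
    (∫⁻ p in (Ioi (0:ℝ)) ×ˢ (Ioi (0:ℝ)),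
        ENNReal.ofReal (h (p.1 + p.2) * Real.exp (-p.2 * z)))
      = ∫⁻ w in Ici (0:ℝ), ENNReal.ofReal (Real.exp (-w * z)) *
          ∫⁻ y in Ici (0:ℝ), ENNReal.ofReal (h (w + y)) := by
  have hmb : Measurable (fun p : ℝ × ℝ => ENNReal.ofReal (h (p.1 + p.2) * Real.exp (-p.2 * z))) :=
    ENNReal.measurable_ofReal.comp
      ((hmeas.comp (measurable_fst.add measurable_snd)).mul
        (Real.measurable_exp.comp ((measurable_snd.neg).mul_const z)))
  rw [Measure.volume_eq_prod, ← Measure.prod_restrict,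
    lintegral_prod_symm _ hmb.aemeasurable]
  rw [restrict_Ioi_eq_restrict_Ici]
  refine lintegral_congr fun w => ?_
  have e : ∀ y : ℝ, ENNReal.ofReal (h (y + w) * Real.exp (-w * z))
      = ENNReal.ofReal (Real.exp (-w * z)) * ENNReal.ofReal (h (w + y)) := by
    intro y
    rw [ENNReal.ofReal_mul (hnn _), add_comm y w]
    ring
  simp_rw [e]
  rw [lintegral_const_mul' _ _ ENNReal.ofReal_ne_top]

/-! ### The main inductive bound -/

def Jm (h : ℝ → ℝ) (m : ℕ) (b : ℝ) : ℝ≥0∞ := ∫⁻ v in SS (2*m) b, G h m b v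

lemma measurable_Jm {h : ℝ → ℝ} (hmeas : Measurable h) (m : ℕ) :
    Measurable (Jm h m) := by
  have e : ∀ b, Jm h m b = ∫⁻ v, (Set.indicator
      {p : ℝ × (Fin (2*m) → ℝ) | p.2 ∈ SS (2*m) p.1}
      (fun p => G h m p.1 p.2)) (b, v) := by
    intro b
    rw [Jm, ← lintegral_indicator (measurableSet_SS _ _)]
    refine lintegral_congr fun v => ?_
    by_cases hv : v ∈ SS (2*m) b
    · rw [Set.indicator_of_mem hv, Set.indicator_of_mem (by exact hv)]
    · rw [Set.indicator_of_notMem hv, Set.indicator_of_notMem (by exact hv)]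
  have e' : Jm h m = fun b => ∫⁻ v, (Set.indicator
      {p : ℝ × (Fin (2*m) → ℝ) | p.2 ∈ SS (2*m) p.1}
      (fun p => G h m p.1 p.2)) (b, v) := funext e
  rw [e']
  have mf : Measurable (Set.indicator
      {p : ℝ × (Fin (2*m) → ℝ) | p.2 ∈ SS (2*m) p.1}
      (fun p => G h m p.1 p.2)) :=
    (measurable_G hmeas m).indicator (measurableSet_SS_prod (2*m))
  exact mf.lintegral_prod_right'

lemma measurable_insertNth_last (k : ℕ) (x : ℝ) :
    Measurable fun w : Fin k → ℝ => ((Fin.last k).insertNth x w : Fin (k+1) → ℝ) := by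
  refine measurable_pi_iff.2 fun j => ?_
  induction j using Fin.lastCases with
  | last =>
    have hv : ∀ w : Fin k → ℝ,
        ((Fin.last k).insertNth x w : Fin (k+1) → ℝ) (Fin.last k) = x :=
      fun w => Fin.insertNth_apply_same _ _ _
    simp only [hv]
    exact measurable_const
  | cast j =>
    have hv : ∀ w : Fin k → ℝ,
        ((Fin.last k).insertNth x w : Fin (k+1) → ℝ) j.castSucc = w j := by
      intro w
      rw [← Fin.succAbove_last, Fin.insertNth_apply_succAbove]
    simp only [hv]
    exact measurable_pi_apply j

set_option maxHeartbeats 2000000 in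
lemma step {h : ℝ → ℝ} (hmeas : Measurable h) (hnn : ∀ s, 0 ≤ h s) (z : ℝ) (m : ℕ) :
    (∫⁻ t in Ioi (0:ℝ), ENNReal.ofReal (Real.exp (-t * z)) * Jm h (m+1) t)
      ≤ (∫⁻ p in (Ioi (0:ℝ)) ×ˢ (Ioi (0:ℝ)),
          ENNReal.ofReal (h (p.1 + p.2) * Real.exp (-p.2 * z))) *
        (∫⁻ t in Ioi (0:ℝ), ENNReal.ofReal (Real.exp (-t * z)) * Jm h m t) := by
  set B₂ := ∫⁻ w in Ici (0:ℝ), ENNReal.ofReal (Real.exp (-w * z)) *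
      ∫⁻ y in Ici (0:ℝ), ENNReal.ofReal (h (w + y)) with hB₂
  -- the inner bound
  have inner : ∀ t : ℝ, Jm h (m+1) t ≤
      ∫⁻ b, (Icc 0 t).indicator (1 : ℝ → ℝ≥0∞) b * Jm h m b * Kk h t b := by
    intro t
    have hGm : Measurable (fun u : Fin (2*m+1+1) → ℝ => G h (m+1) t u) :=
      (measurable_G hmeas (m+1)).comp (measurable_const.prodMk measurable_id)
    set F : (Fin (2*m+1+1) → ℝ) → ℝ≥0∞ :=
      fun u => (SS (2*m+1+1) t).indicator (fun u => G h (m+1) t u) u with hF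
    have hFmeas : Measurable F := hGm.indicator (measurableSet_SS _ _)
    have h0 : Jm h (m+1) t = ∫⁻ u, F u :=
      (lintegral_indicator (measurableSet_SS (2*m+1+1) t) _).symm
    have hinsm : ∀ x : ℝ, Measurable fun w : Fin (2*m+1) → ℝ =>
        ((Fin.last (2*m+1)).insertNth x w : Fin (2*m+1+1) → ℝ) :=
      fun x => measurable_insertNth_last (2*m+1) x
    have h1 : ∀ x : ℝ, (∫⁻ w : Fin (2*m+1) → ℝ, F ((Fin.last (2*m+1)).insertNth x w))
        = ∫⁻ a : ℝ, ∫⁻ v : Fin (2*m) → ℝ, F (reas m x a v) :=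
      fun x => peel (2*m) _ (hFmeas.comp (hinsm x))
    rw [h0, peel (2*m+1) F hFmeas, lintegral_congr h1]
    have h2 : ∀ (x a : ℝ) (v : Fin (2*m) → ℝ), F (reas m x a v) ≤
        ((Icc 0 t).indicator (1 : ℝ → ℝ≥0∞) x *
          (Iic x).indicator (fun a => ENNReal.ofReal (h (t - a))) a) *
        (SS (2*m) x).indicator (fun v => G h m x v) v := by
      intro x a v
      by_cases hu : reas m x a v ∈ SS (2*m+1+1) t
      · obtain ⟨hv, hax, hx⟩ := reas_mem hu
        have hFeq : F (reas m x a v) = G h (m+1) t (reas m x a v) :=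
          Set.indicator_of_mem hu _
        have hcv : (fun j : Fin (2*m) => reas m x a v (Fin.castLE (by omega) j)) = v :=
          funext fun j => reas_cast j
        rw [hFeq, G_succ h m t (reas m x a v), reas_idx_top, reas_idx_snd, hcv]
        rw [Set.indicator_of_mem hx, Set.indicator_of_mem (Set.mem_Iic.2 hax),
          Set.indicator_of_mem hv]
        simp only [Pi.one_apply, one_mul]
        exact le_of_eq (mul_comm _ _)
      · rw [show F (reas m x a v) = 0 from Set.indicator_of_notMem hu _]
        exact zero_le
    calc (∫⁻ x : ℝ, ∫⁻ a : ℝ, ∫⁻ v : Fin (2*m) → ℝ, F (reas m x a v))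
        ≤ ∫⁻ x : ℝ, ∫⁻ a : ℝ, ∫⁻ v : Fin (2*m) → ℝ,
            ((Icc 0 t).indicator (1 : ℝ → ℝ≥0∞) x *
              (Iic x).indicator (fun a => ENNReal.ofReal (h (t - a))) a) *
            (SS (2*m) x).indicator (fun v => G h m x v) v :=
          lintegral_mono fun x => lintegral_mono fun a => lintegral_mono fun v => h2 x a v
      _ = ∫⁻ x : ℝ, (Icc 0 t).indicator (1 : ℝ → ℝ≥0∞) x * Jm h m x * Kk h t x := by
          refine lintegral_congr fun x => ?_
          have hgv : Measurable fun v : Fin (2*m) → ℝ =>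
              (SS (2*m) x).indicator (fun v => G h m x v) v :=
            (((measurable_G hmeas m).comp
              (measurable_const.prodMk measurable_id)).indicator (measurableSet_SS _ _))
          have hJ : (∫⁻ v : Fin (2*m) → ℝ, (SS (2*m) x).indicator (fun v => G h m x v) v)
              = Jm h m x := lintegral_indicator (measurableSet_SS _ _) _
          have s1 : ∀ a : ℝ, (∫⁻ v : Fin (2*m) → ℝ,
              ((Icc 0 t).indicator (1 : ℝ → ℝ≥0∞) x *
                (Iic x).indicator (fun a => ENNReal.ofReal (h (t - a))) a) *
              (SS (2*m) x).indicator (fun v => G h m x v) v)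
              = ((Icc 0 t).indicator (1 : ℝ → ℝ≥0∞) x *
                  (Iic x).indicator (fun a => ENNReal.ofReal (h (t - a))) a) * Jm h m x :=
            fun a => by rw [lintegral_const_mul _ hgv, hJ]
          rw [lintegral_congr s1]
          have s2 : ∀ a : ℝ, ((Icc 0 t).indicator (1 : ℝ → ℝ≥0∞) x *
              (Iic x).indicator (fun a => ENNReal.ofReal (h (t - a))) a) * Jm h m x
              = ((Icc 0 t).indicator (1 : ℝ → ℝ≥0∞) x * Jm h m x) *
                (Iic x).indicator (fun a => ENNReal.ofReal (h (t - a))) a :=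
            fun a => by ring
          have hd : Measurable fun a : ℝ =>
              (Iic x).indicator (fun a => ENNReal.ofReal (h (t - a))) a := by
            have hd0 : Measurable fun a : ℝ => ENNReal.ofReal (h (t - a)) :=
              ENNReal.measurable_ofReal.comp
                (hmeas.comp (measurable_const.sub measurable_id))
            exact hd0.indicator measurableSet_Iic
          rw [lintegral_congr s2, lintegral_const_mul _ hd,
            lintegral_indicator measurableSet_Iic, Kk, mul_assoc]
  -- outer chain
  have main1 : (∫⁻ t in Ioi (0:ℝ), ENNReal.ofReal (Real.exp (-t * z)) * Jm h (m+1) t)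
      ≤ ∫⁻ t in Ioi (0:ℝ), ∫⁻ b : ℝ, ENNReal.ofReal (Real.exp (-t * z)) *
          ((Icc 0 t).indicator (1 : ℝ → ℝ≥0∞) b * Jm h m b * Kk h t b) := by
    refine lintegral_mono fun t => ?_
    calc ENNReal.ofReal (Real.exp (-t * z)) * Jm h (m+1) t
        ≤ ENNReal.ofReal (Real.exp (-t * z)) *
            ∫⁻ b : ℝ, (Icc 0 t).indicator (1 : ℝ → ℝ≥0∞) b * Jm h m b * Kk h t b :=
          mul_le_mul_right (inner t) _
      _ = _ := (lintegral_const_mul' _ _ ENNReal.ofReal_ne_top).symm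
  refine main1.trans ?_
  have hind : Measurable (fun p : ℝ × ℝ => (Icc 0 p.1).indicator (1 : ℝ → ℝ≥0∞) p.2) := by
    have hset : MeasurableSet {q : ℝ × ℝ | q.2 ∈ Icc 0 q.1} := by
      have : {q : ℝ × ℝ | q.2 ∈ Icc 0 q.1}
          = {q : ℝ × ℝ | 0 ≤ q.2} ∩ {q : ℝ × ℝ | q.2 ≤ q.1} := by
        ext q; simp [Set.mem_Icc, Set.mem_setOf_eq]
      rw [this]
      exact (measurableSet_le measurable_const measurable_snd).inter
        (measurableSet_le measurable_snd measurable_fst)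
    have e : (fun p : ℝ × ℝ => (Icc 0 p.1).indicator (1 : ℝ → ℝ≥0∞) p.2)
        = Set.indicator {q : ℝ × ℝ | q.2 ∈ Icc 0 q.1} (1 : ℝ × ℝ → ℝ≥0∞) := by
      funext p
      simp [Set.indicator_apply]
    rw [e]
    exact measurable_const.indicator hset
  have hjoint : Measurable (fun p : ℝ × ℝ => ENNReal.ofReal (Real.exp (-p.1 * z)) *
      ((Icc 0 p.1).indicator (1 : ℝ → ℝ≥0∞) p.2 * Jm h m p.2 * Kk h p.1 p.2)) :=
    ((measurable_exp_aux z).comp measurable_fst).mul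
      ((hind.mul ((measurable_Jm hmeas m).comp measurable_snd)).mul (measurable_Kk hmeas))
  rw [lintegral_lintegral_swap hjoint.aemeasurable]
  have perb : ∀ b : ℝ, (∫⁻ t in Ioi (0:ℝ), ENNReal.ofReal (Real.exp (-t * z)) *
      ((Icc 0 t).indicator (1 : ℝ → ℝ≥0∞) b * Jm h m b * Kk h t b))
      = Jm h m b * ∫⁻ t in Ioi (0:ℝ), ENNReal.ofReal (Real.exp (-t * z)) *
          (Icc 0 t).indicator (1 : ℝ → ℝ≥0∞) b * Kk h t b := by
    intro b
    have hmt : Measurable fun t : ℝ => ENNReal.ofReal (Real.exp (-t * z)) *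
        (Icc 0 t).indicator (1 : ℝ → ℝ≥0∞) b * Kk h t b :=
      ((measurable_exp_aux z).mul
        (hind.comp (measurable_prodMk_right : Measurable fun t : ℝ => (t, b)))).mul
        (measurable_Kk_left hmeas b)
    rw [← lintegral_const_mul _ hmt]
    refine lintegral_congr fun t => ?_
    ring
  rw [lintegral_congr perb]
  have bnd : ∀ b : ℝ, Jm h m b * (∫⁻ t in Ioi (0:ℝ), ENNReal.ofReal (Real.exp (-t * z)) *
      (Icc 0 t).indicator (1 : ℝ → ℝ≥0∞) b * Kk h t b)
      ≤ (Ici 0).indicator (fun b => ENNReal.ofReal (Real.exp (-b * z)) * Jm h m b) b * B₂ := by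
    intro b
    refine le_trans (mul_le_mul_right (Cb hmeas z b) _) ?_
    by_cases hb : b ∈ Ici (0:ℝ)
    · rw [Set.indicator_of_mem hb, Set.indicator_of_mem hb]
      exact le_of_eq (by ring)
    · rw [Set.indicator_of_notMem hb, Set.indicator_of_notMem hb]
      simp
  refine (lintegral_mono bnd).trans ?_
  have hmb2 : Measurable fun b : ℝ => (Ici (0:ℝ)).indicator
      (fun b => ENNReal.ofReal (Real.exp (-b * z)) * Jm h m b) b :=
    ((measurable_exp_aux z).mul (measurable_Jm hmeas m)).indicator measurableSet_Ici
  have heq : (∫⁻ b : ℝ, (Ici (0:ℝ)).indicator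
        (fun b => ENNReal.ofReal (Real.exp (-b * z)) * Jm h m b) b * B₂)
      = B₂ * ∫⁻ b in Ioi (0:ℝ), ENNReal.ofReal (Real.exp (-b * z)) * Jm h m b := by
    rw [lintegral_congr fun b => mul_comm _ B₂, lintegral_const_mul _ hmb2,
      lintegral_indicator measurableSet_Ici, ← restrict_Ioi_eq_restrict_Ici]
  rw [heq, hB₂, ← Bconv hmeas hnn z]

lemma key {h : ℝ → ℝ} (hmeas : Measurable h) (hnn : ∀ s, 0 ≤ h s) (z : ℝ) (m : ℕ) :
    (∫⁻ t in Ioi (0:ℝ), ENNReal.ofReal (Real.exp (-t * z)) * Jm h m t)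
      ≤ (∫⁻ w in Ioi (0:ℝ), ENNReal.ofReal (h w * Real.exp (-w * z))) *
        (∫⁻ p in (Ioi (0:ℝ)) ×ˢ (Ioi (0:ℝ)),
          ENNReal.ofReal (h (p.1 + p.2) * Real.exp (-p.2 * z))) ^ m := by
  induction m with
  | zero =>
    have hJ : ∀ t : ℝ, Jm h 0 t = ENNReal.ofReal (h t) := by
      intro t
      rw [Jm]
      have huniv : SS (2*0) t = (Set.univ : Set (Fin (2*0) → ℝ)) := by
        ext u
        constructor
        · intro _; trivial
        · intro _; exact ⟨fun i => i.elim0, fun i => i.elim0⟩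
      rw [huniv, Measure.restrict_univ]
      have hc : (fun v : Fin (2*0) → ℝ => G h 0 t v) = fun _ => ENNReal.ofReal (h t) := rfl
      rw [hc, lintegral_const]
      have h1 : (volume : Measure (Fin (2*0) → ℝ)) Set.univ = 1 := by
        rw [volume_pi, Measure.pi_univ]
        simp
      rw [h1, mul_one]
    simp only [pow_zero, mul_one]
    refine le_of_eq (lintegral_congr fun t => ?_)
    rw [hJ t, mul_comm, ← ENNReal.ofReal_mul (hnn t)]
  | succ m ih =>
    calc (∫⁻ t in Ioi (0:ℝ), ENNReal.ofReal (Real.exp (-t * z)) * Jm h (m+1) t)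
        ≤ (∫⁻ p in (Ioi (0:ℝ)) ×ˢ (Ioi (0:ℝ)),
            ENNReal.ofReal (h (p.1 + p.2) * Real.exp (-p.2 * z))) *
          (∫⁻ t in Ioi (0:ℝ), ENNReal.ofReal (Real.exp (-t * z)) * Jm h m t) :=
          step hmeas hnn z m
      _ ≤ (∫⁻ p in (Ioi (0:ℝ)) ×ˢ (Ioi (0:ℝ)),
            ENNReal.ofReal (h (p.1 + p.2) * Real.exp (-p.2 * z))) *
          ((∫⁻ w in Ioi (0:ℝ), ENNReal.ofReal (h w * Real.exp (-w * z))) *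
            (∫⁻ p in (Ioi (0:ℝ)) ×ˢ (Ioi (0:ℝ)),
              ENNReal.ofReal (h (p.1 + p.2) * Real.exp (-p.2 * z))) ^ m) :=
          mul_le_mul_right ih _
      _ = _ := by ring

end MinIrrAux

open MinIrrAux in
/-- Laplace-transform bound for the minimally irreducible pairing:
`∫_{ℝ₊} e^{-tz} χ_t(π) dt ≤ (∫ h(w)e^{-wz} dw) (∫∫ h(y+w)e^{-wz} dy dw)^{n-1}`. -/
theorem laplace_transform_minimally_irreducible_bound
    (h : ℝ → ℝ) (hmeas : Measurable h) (hnn : ∀ s, 0 ≤ h s)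
    (z : ℝ) (n : ℕ) (hn : 1 ≤ n)
    (h1 : IntegrableOn (fun w => h w * Real.exp (-w * z)) (Set.Ioi 0))
    (h2 : IntegrableOn (fun p : ℝ × ℝ => h (p.1 + p.2) * Real.exp (-p.2 * z))
      ((Set.Ioi (0 : ℝ)) ×ˢ (Set.Ioi (0 : ℝ)))) :
    (∫ t in Set.Ioi (0 : ℝ), Real.exp (-t * z) * chi h n t (minIrr n))
      ≤ (∫ w in Set.Ioi (0 : ℝ), h w * Real.exp (-w * z)) *
        (∫ p in (Set.Ioi (0 : ℝ)) ×ˢ (Set.Ioi (0 : ℝ)),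
            h (p.1 + p.2) * Real.exp (-p.2 * z)) ^ (n - 1) := by
  obtain ⟨m, rfl⟩ : ∃ m, n = m + 1 := ⟨n - 1, by omega⟩
  have hA0 : 0 ≤ ∫ w in Set.Ioi (0:ℝ), h w * Real.exp (-w * z) :=
    setIntegral_nonneg measurableSet_Ioi fun w _ => mul_nonneg (hnn w) (exp_nonneg _)
  have hB0 : 0 ≤ ∫ p in (Set.Ioi (0:ℝ)) ×ˢ (Set.Ioi (0:ℝ)),
      h (p.1 + p.2) * Real.exp (-p.2 * z) :=
    setIntegral_nonneg (measurableSet_Ioi.prod measurableSet_Ioi)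
      fun p _ => mul_nonneg (hnn _) (exp_nonneg _)
  by_cases hae : AEStronglyMeasurable
      (fun t => Real.exp (-t * z) * chi h (m+1) t (minIrr (m+1)))
      (volume.restrict (Set.Ioi 0))
  case neg =>
    rw [integral_undef (fun hint => hae hint.1)]
    exact mul_nonneg hA0 (pow_nonneg hB0 _)
  case pos =>
  have hchinn : ∀ t, 0 ≤ chi h (m+1) t (minIrr (m+1)) := fun t =>
    integral_nonneg fun u => Finset.prod_nonneg fun p _ => hnn _
  rw [integral_eq_lintegral_of_nonneg_ae
    (ae_of_all _ fun t => mul_nonneg (exp_nonneg _) (hchinn t)) hae]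
  have hXle : (∫⁻ t in Set.Ioi (0:ℝ),
        ENNReal.ofReal (Real.exp (-t * z) * chi h (m+1) t (minIrr (m+1))))
      ≤ ENNReal.ofReal (∫ w in Set.Ioi (0:ℝ), h w * Real.exp (-w * z)) *
        (ENNReal.ofReal (∫ p in (Set.Ioi (0:ℝ)) ×ˢ (Set.Ioi (0:ℝ)),
          h (p.1 + p.2) * Real.exp (-p.2 * z))) ^ m := by
    have pt : ∀ t : ℝ, ENNReal.ofReal (Real.exp (-t * z) * chi h (m+1) t (minIrr (m+1)))
        ≤ ENNReal.ofReal (Real.exp (-t * z)) * Jm h m t := by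
      intro t
      rw [ENNReal.ofReal_mul (exp_nonneg _)]
      refine mul_le_mul_right ?_ _
      by_cases hi : Integrable
          (fun u : Fin (2*(m+1)-2) → ℝ =>
            ∏ p ∈ minIrr (m+1), h (tmv (m+1) t u p.2 - tmv (m+1) t u p.1))
          (volume.restrict (SS (2*(m+1)-2) t))
      · have hce : chi h (m+1) t (minIrr (m+1)) = ENNReal.toReal
            (∫⁻ u in SS (2*(m+1)-2) t, ENNReal.ofReal
              (∏ p ∈ minIrr (m+1), h (tmv (m+1) t u p.2 - tmv (m+1) t u p.1))) :=
          integral_eq_lintegral_of_nonneg_ae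
            (ae_of_all _ fun u => Finset.prod_nonneg fun p _ => hnn _) hi.1
        rw [hce]
        refine le_trans ENNReal.ofReal_toReal_le (le_of_eq ?_)
        have : (∫⁻ u in SS (2*(m+1)-2) t, ENNReal.ofReal
              (∏ p ∈ minIrr (m+1), h (tmv (m+1) t u p.2 - tmv (m+1) t u p.1)))
            = ∫⁻ u in SS (2*(m+1)-2) t, G h m t u :=
          lintegral_congr fun u => prod_minIrr hnn m t u
        rw [this]
        rfl
      · have hce : chi h (m+1) t (minIrr (m+1)) = 0 := integral_undef hi
        rw [hce]
        simp
    refine (lintegral_mono pt).trans ?_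
    refine (key hmeas hnn z m).trans (le_of_eq ?_)
    rw [← ofReal_integral_eq_lintegral_ofReal h1
        (ae_of_all _ fun w => mul_nonneg (hnn w) (exp_nonneg _)),
      ← ofReal_integral_eq_lintegral_ofReal h2
        (ae_of_all _ fun p => mul_nonneg (hnn _) (exp_nonneg _))]
  have hfin : ENNReal.ofReal (∫ w in Set.Ioi (0:ℝ), h w * Real.exp (-w * z)) *
      (ENNReal.ofReal (∫ p in (Set.Ioi (0:ℝ)) ×ˢ (Set.Ioi (0:ℝ)),
        h (p.1 + p.2) * Real.exp (-p.2 * z))) ^ m ≠ ⊤ :=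
    ENNReal.mul_ne_top ENNReal.ofReal_ne_top (ENNReal.pow_ne_top ENNReal.ofReal_ne_top)
  calc ENNReal.toReal (∫⁻ t in Set.Ioi (0:ℝ),
        ENNReal.ofReal (Real.exp (-t * z) * chi h (m+1) t (minIrr (m+1))))
      ≤ ENNReal.toReal (ENNReal.ofReal (∫ w in Set.Ioi (0:ℝ), h w * Real.exp (-w * z)) *
          (ENNReal.ofReal (∫ p in (Set.Ioi (0:ℝ)) ×ˢ (Set.Ioi (0:ℝ)),
            h (p.1 + p.2) * Real.exp (-p.2 * z))) ^ m) := ENNReal.toReal_mono hfin hXle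
    _ = (∫ w in Set.Ioi (0:ℝ), h w * Real.exp (-w * z)) *
        (∫ p in (Set.Ioi (0:ℝ)) ×ˢ (Set.Ioi (0:ℝ)),
          h (p.1 + p.2) * Real.exp (-p.2 * z)) ^ m := by
        rw [ENNReal.toReal_mul, ENNReal.toReal_pow, ENNReal.toReal_ofReal hA0,
          ENNReal.toReal_ofReal hB0]
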